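/- arXiv:2212.14562 — 4 statements merged into one kernel-verified Lean document; each statement's English description precedes it below -/
import Mathlib

section
/- Let x = (x₁, …, x_d) be a random vector with E|x_i|⁴ ≤ M for every i ∈ {1,…,d}, and let ζ > 0. Define the truncated vector x̃ entrywise by x̃_i = sign(x_i)·min{|x_i|, ζ}. Then for all i, j ∈ {1,…,d}, |E[x̃_i x̃_j] − E[x_i x_j]| ≤ 2M/ζ². -/
open MeasureTheory ProbabilityTheory

noncomputable section

/-- Truncation of a real number at level `ζ` : `sign(a) * min {|a|, ζ}`. -/
def trunc (ζ a : ℝ) : ℝ := Real.sign a * min |a| ζ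

lemma trunc_eq_clamp {ζ : ℝ} (hζ : 0 < ζ) (a : ℝ) :
    trunc ζ a = max (-ζ) (min a ζ) := by
  rcases lt_trichotomy a 0 with h | h | h
  · rw [trunc, Real.sign_of_neg h, abs_of_neg h, min_eq_left (le_of_lt (lt_of_lt_of_le h hζ.le))]
    rcases le_total (-a) ζ with h2 | h2
    · rw [min_eq_left h2, max_eq_right (by linarith)]; ring
    · rw [min_eq_right h2, max_eq_left (by linarith)]; ring
  · simp [trunc, h, Real.sign_zero, le_of_lt hζ]
  · rw [trunc, Real.sign_of_pos h, abs_of_pos h, one_mul]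
    exact (max_eq_right (le_min (by linarith) (by linarith))).symm

lemma trunc_abs_le {ζ : ℝ} (hζ : 0 < ζ) (a : ℝ) : |trunc ζ a| ≤ |a| := by
  rw [trunc_eq_clamp hζ]
  rcases le_total a (-ζ) with h | h
  · rw [max_eq_left (min_le_of_left_le h), abs_of_nonpos (by linarith),
      abs_of_nonpos (by linarith)]
    linarith
  · rcases le_total ζ a with h2 | h2
    · rw [min_eq_right h2, max_eq_right (by linarith), abs_of_nonneg hζ.le,
        abs_of_nonneg (by linarith)]
      linarith
    · rw [min_eq_left h2, max_eq_right h]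

lemma trunc_abs_le_zeta {ζ : ℝ} (hζ : 0 < ζ) (a : ℝ) : |trunc ζ a| ≤ ζ := by
  rw [trunc_eq_clamp hζ, abs_le]
  exact ⟨le_max_left _ _, max_le (by linarith) (min_le_right _ _)⟩

lemma trunc_sub_le {ζ : ℝ} (hζ : 0 < ζ) (a : ℝ) :
    |trunc ζ a - a| ≤ |a| ^ 3 / ζ ^ 2 := by
  rw [trunc_eq_clamp hζ]
  rcases le_total a (-ζ) with h | h
  · rw [max_eq_left (min_le_of_left_le h), abs_of_nonneg (by linarith),
      abs_of_nonpos (by linarith), le_div_iff₀ (by positivity)]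
    nlinarith [mul_nonneg (mul_nonneg (by linarith : (0:ℝ) ≤ -a) (by linarith : (0:ℝ) ≤ -a - ζ))
      (by linarith : (0:ℝ) ≤ -a + ζ), pow_pos hζ 3]
  · rcases le_total ζ a with h2 | h2
    · rw [min_eq_right h2, max_eq_right (by linarith), abs_of_nonpos (by linarith),
        abs_of_nonneg (by linarith), le_div_iff₀ (by positivity)]
      nlinarith [mul_nonneg (mul_nonneg (by linarith : (0:ℝ) ≤ a) (by linarith : (0:ℝ) ≤ a - ζ))
        (by linarith : (0:ℝ) ≤ a + ζ), pow_pos hζ 3]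
    · rw [min_eq_left h2, max_eq_right h, sub_self, abs_zero]
      positivity

lemma key_pointwise {ζ : ℝ} (hζ : 0 < ζ) (a b : ℝ) :
    |trunc ζ a * trunc ζ b - a * b| ≤ (|a| ^ 4 + |b| ^ 4) / ζ ^ 2 := by
  have h1 : |trunc ζ a * trunc ζ b - a * b|
      ≤ |trunc ζ a| * |trunc ζ b - b| + |b| * |trunc ζ a - a| := by
    calc |trunc ζ a * trunc ζ b - a * b|
        = |trunc ζ a * (trunc ζ b - b) + b * (trunc ζ a - a)| := by ring_nf
      _ ≤ |trunc ζ a * (trunc ζ b - b)| + |b * (trunc ζ a - a)| := abs_add_le _ _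
      _ = |trunc ζ a| * |trunc ζ b - b| + |b| * |trunc ζ a - a| := by
          rw [abs_mul, abs_mul]
  have h2 := trunc_abs_le hζ a
  have h3 := trunc_sub_le hζ b
  have h4 := trunc_sub_le hζ a
  have ha1 : |trunc ζ a| * |trunc ζ b - b| ≤ |a| * (|b| ^ 3 / ζ ^ 2) :=
    mul_le_mul h2 h3 (abs_nonneg _) (abs_nonneg _)
  have ha2 : |b| * |trunc ζ a - a| ≤ |b| * (|a| ^ 3 / ζ ^ 2) :=
    mul_le_mul_of_nonneg_left h4 (abs_nonneg b)
  have hyoung : |a| * |b| ^ 3 + |b| * |a| ^ 3 ≤ |a| ^ 4 + |b| ^ 4 := by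
    nlinarith [sq_nonneg (|a| - |b|), sq_nonneg (|a| + |b|), sq_nonneg (|a| * |b|),
      abs_nonneg a, abs_nonneg b, sq_nonneg (|a|^2 - |b|^2), mul_nonneg (abs_nonneg a) (abs_nonneg b)]
  calc |trunc ζ a * trunc ζ b - a * b| ≤ _ := h1
    _ ≤ |a| * (|b| ^ 3 / ζ ^ 2) + |b| * (|a| ^ 3 / ζ ^ 2) := add_le_add ha1 ha2
    _ = (|a| * |b| ^ 3 + |b| * |a| ^ 3) / ζ ^ 2 := by ring
    _ ≤ (|a| ^ 4 + |b| ^ 4) / ζ ^ 2 := by gcongr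

/-- bias of elementwise truncation under bounded fourth moments.
If `x = (x₁, …, x_d)` is a random vector with `E|x_i|⁴ ≤ M` for every coordinate and `ζ > 0`,
and `x̃_i = sign(x_i)·min{|x_i|, ζ}`, then `|E[x̃_i x̃_j] − E[x_i x_j]| ≤ 2M/ζ²` for all `i, j`. -/
theorem truncation_bias
    {Ω : Type*} [MeasurableSpace Ω] (μ : Measure Ω) [IsProbabilityMeasure μ]
    {d : ℕ} (x : Ω → Fin d → ℝ)
    (hmeas : ∀ i, Measurable fun ω => x ω i)
    (M : ℝ)
    (hint4 : ∀ i, Integrable (fun ω => |x ω i| ^ 4) μ)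
    (hM : ∀ i, ∫ ω, |x ω i| ^ 4 ∂μ ≤ M)
    (ζ : ℝ) (hζ : 0 < ζ) :
    ∀ i j, |(∫ ω, trunc ζ (x ω i) * trunc ζ (x ω j) ∂μ) - ∫ ω, x ω i * x ω j ∂μ|
      ≤ 2 * M / ζ ^ 2 := by
  intro i j
  have hTmeas : ∀ i, Measurable fun ω => trunc ζ (x ω i) := by
    intro i
    have : (fun ω => trunc ζ (x ω i)) = fun ω => max (-ζ) (min (x ω i) ζ) := by
      funext ω; exact trunc_eq_clamp hζ _
    rw [this]
    exact measurable_const.max ((hmeas i).min measurable_const)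
  have hintT : Integrable (fun ω => trunc ζ (x ω i) * trunc ζ (x ω j)) μ := by
    apply Integrable.mono' (integrable_const (ζ * ζ))
      ((hTmeas i).mul (hTmeas j)).aestronglyMeasurable
    filter_upwards with ω
    rw [Real.norm_eq_abs, Pi.mul_apply, abs_mul]
    exact mul_le_mul (trunc_abs_le_zeta hζ _) (trunc_abs_le_zeta hζ _) (abs_nonneg _) hζ.le
  have hintX : Integrable (fun ω => x ω i * x ω j) μ := by
    apply Integrable.mono' ((((hint4 i).add (hint4 j)).add (integrable_const 2)).div_const 4)
      ((hmeas i).mul (hmeas j)).aestronglyMeasurable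
    filter_upwards with ω
    rw [Real.norm_eq_abs, Pi.mul_apply, abs_mul]
    simp only [Pi.add_apply]
    nlinarith [sq_nonneg (|x ω i| - |x ω j|), sq_nonneg (|x ω i|^2 - 1), sq_nonneg (|x ω j|^2 - 1),
      abs_nonneg (x ω i), abs_nonneg (x ω j), sq_nonneg (|x ω i|^2 - |x ω j|^2)]
  rw [← integral_sub hintT hintX]
  calc |∫ ω, (trunc ζ (x ω i) * trunc ζ (x ω j) - x ω i * x ω j) ∂μ|
      ≤ ∫ ω, |trunc ζ (x ω i) * trunc ζ (x ω j) - x ω i * x ω j| ∂μ :=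
        by simpa [Real.norm_eq_abs] using
          norm_integral_le_integral_norm
            (fun ω => trunc ζ (x ω i) * trunc ζ (x ω j) - x ω i * x ω j) (μ := μ)
    _ ≤ ∫ ω, (|x ω i| ^ 4 + |x ω j| ^ 4) / ζ ^ 2 ∂μ := by
        apply integral_mono_of_nonneg
        · filter_upwards with ω; positivity
        · exact ((hint4 i).add (hint4 j)).div_const _
        · filter_upwards with ω
          exact key_pointwise hζ _ _
    _ = ((∫ ω, |x ω i| ^ 4 ∂μ) + ∫ ω, |x ω j| ^ 4 ∂μ) / ζ ^ 2 := by
        rw [integral_div, integral_add (hint4 i) (hint4 j)]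
    _ ≤ 2 * M / ζ ^ 2 := by
        have h1 := hM i
        have h2 := hM j
        gcongr
        have : (0:ℝ) ≤ ∫ ω, |x ω i| ^ 4 ∂μ := integral_nonneg fun ω => by positivity
        linarith
end
end

section
/- There exist universal constants C₁, C₂, C₃ > 0 such that the following deterministic statement holds. Let θ* ∈ ℝ^d be s-sparse with ‖θ*‖₁ ≤ R, and let Σ* ∈ ℝ^{d×d} be a symmetric matrix with λ_min(Σ*) ≥ κ₀ > 0. Let Q ∈ ℝ^{d×d} be symmetric, b ∈ ℝ^d, and suppose λ ≥ C₁·max{ ‖Qθ* − b‖_∞, R·‖Q − Σ*‖_∞ }. Then every stationary point θ̃ of the program min_{θ∈S} ½θᵀQθ − bᵀθ + λ‖θ‖₁ with S = {θ ∈ ℝ^d : ‖θ‖₁ ≤ R} satisfies ‖θ̃ − θ*‖₂ ≤ C₂·√s·λ/κ₀ and ‖θ̃ − θ*‖₁ ≤ C₃·s·λ/κ₀. -/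
open Finset

noncomputable section

/-- ℓ₁ norm on `ℝ^d`. -/
def l1 {d : ℕ} (v : Fin d → ℝ) : ℝ := ∑ i, |v i|

/-- ℓ₂ norm on `ℝ^d`. -/
def l2 {d : ℕ} (v : Fin d → ℝ) : ℝ := Real.sqrt (∑ i, (v i) ^ 2)

/-- ℓ∞ norm on `ℝ^d` (maximum absolute entry). -/
def linf {d : ℕ} (v : Fin d → ℝ) : ℝ := sSup {r : ℝ | ∃ i, r = |v i|}

/-- Maximum absolute entry of a matrix. -/
def matSup {d : ℕ} (A : Matrix (Fin d) (Fin d) ℝ) : ℝ := sSup {r : ℝ | ∃ i j, r = |A i j|}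

/-- A vector is `s`-sparse if it has at most `s` nonzero entries. -/
def sparse {d : ℕ} (s : ℕ) (v : Fin d → ℝ) : Prop := {i | v i ≠ 0}.ncard ≤ s

/-- The quadratic form `vᵀ A v` of a matrix. -/
def quadForm {d : ℕ} (A : Matrix (Fin d) (Fin d) ℝ) (v : Fin d → ℝ) : ℝ :=
  ∑ i, ∑ j, v i * A i j * v j

/-- `g` belongs to the subdifferential of the ℓ₁ norm at `θ`. -/
def IsL1Subgradient {d : ℕ} (g θ : Fin d → ℝ) : Prop :=
  ∀ θ' : Fin d → ℝ, l1 θ + ∑ i, g i * (θ' i - θ i) ≤ l1 θ'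

/-- `θ̃ ∈ S` is a stationary point of `min_{θ∈S} ½θᵀQθ − bᵀθ + λ‖θ‖₁`:
there is a subgradient `g` of the ℓ₁ norm at `θ̃` with
`⟨Qθ̃ − b + λg, θ − θ̃⟩ ≥ 0` for all `θ ∈ S`. -/
def IsStationaryL1 {d : ℕ} (Q : Matrix (Fin d) (Fin d) ℝ) (b : Fin d → ℝ) (lam : ℝ)
    (S : Set (Fin d → ℝ)) (θt : Fin d → ℝ) : Prop :=
  θt ∈ S ∧ ∃ g : Fin d → ℝ, IsL1Subgradient g θt ∧
    ∀ θ ∈ S, 0 ≤ ∑ i, (Q.mulVec θt i - b i + lam * g i) * (θ i - θt i)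

/- ### Auxiliary lemmas -/

lemma linf_nonneg {d : ℕ} (v : Fin d → ℝ) : 0 ≤ linf v :=
  Real.sSup_nonneg (by rintro x ⟨i, rfl⟩; exact abs_nonneg _)

lemma matSup_nonneg {d : ℕ} (A : Matrix (Fin d) (Fin d) ℝ) : 0 ≤ matSup A :=
  Real.sSup_nonneg (by rintro x ⟨i, j, rfl⟩; exact abs_nonneg _)

lemma abs_le_linf {d : ℕ} (v : Fin d → ℝ) (i : Fin d) : |v i| ≤ linf v := by
  have hset : {r : ℝ | ∃ i, r = |v i|} = Set.range (fun i => |v i|) := by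
    ext r; simp [eq_comm]
  have hbdd : BddAbove {r : ℝ | ∃ i, r = |v i|} := by
    rw [hset]; exact (Set.finite_range _).bddAbove
  exact le_csSup hbdd ⟨i, rfl⟩

lemma abs_le_matSup {d : ℕ} (A : Matrix (Fin d) (Fin d) ℝ) (i j : Fin d) :
    |A i j| ≤ matSup A := by
  have hset : {r : ℝ | ∃ i j, r = |A i j|} =
      Set.range (fun p : Fin d × Fin d => |A p.1 p.2|) := by
    ext r; constructor
    · rintro ⟨i, j, rfl⟩; exact ⟨(i, j), rfl⟩
    · rintro ⟨⟨i, j⟩, rfl⟩; exact ⟨i, j, rfl⟩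
  have hbdd : BddAbove {r : ℝ | ∃ i j, r = |A i j|} := by
    rw [hset]; exact (Set.finite_range _).bddAbove
  exact le_csSup hbdd ⟨i, j, rfl⟩

lemma l2_nonneg {d : ℕ} (v : Fin d → ℝ) : 0 ≤ l2 v := Real.sqrt_nonneg _

/-- Cauchy–Schwarz: `∑_{i∈T} |v i| ≤ √|T| · ‖v‖₂`. -/
lemma sum_abs_le_sqrt_card_mul_l2 {d : ℕ} (T : Finset (Fin d)) (v : Fin d → ℝ) :
    ∑ i ∈ T, |v i| ≤ Real.sqrt T.card * l2 v := by
  have h1 : (∑ i ∈ T, |v i|) ^ 2 ≤ (T.card : ℝ) * ∑ i, (v i) ^ 2 := by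
    have := Finset.sum_mul_sq_le_sq_mul_sq T (fun _ => (1 : ℝ)) (fun i => |v i|)
    simp only [one_mul, one_pow, Finset.sum_const, nsmul_eq_mul, mul_one] at this
    have h2 : ∑ i ∈ T, |v i| ^ 2 ≤ ∑ i, (v i) ^ 2 := by
      refine Finset.sum_le_sum_of_subset_of_nonneg (Finset.subset_univ T) ?_ |>.trans ?_
      · intro i _ _; positivity
      · exact Finset.sum_le_sum (fun i _ => by rw [sq_abs])
    calc (∑ i ∈ T, |v i|) ^ 2 ≤ (T.card : ℝ) * ∑ i ∈ T, |v i| ^ 2 := this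
      _ ≤ (T.card : ℝ) * ∑ i, (v i) ^ 2 := by
          exact mul_le_mul_of_nonneg_left h2 (Nat.cast_nonneg _)
  have hnn : 0 ≤ ∑ i ∈ T, |v i| := Finset.sum_nonneg (fun i _ => abs_nonneg _)
  have := Real.sqrt_le_sqrt h1
  rwa [Real.sqrt_sq hnn, Real.sqrt_mul (Nat.cast_nonneg _)] at this

set_option maxHeartbeats 1000000 in
/-- deterministic guarantee for all stationary points of the possibly
non-convex program. If `θ*` is `s`-sparse with `‖θ*‖₁ ≤ R`, `λ_min(Σ*) ≥ κ₀ > 0`, and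
`λ ≥ C₁·max{‖Qθ* − b‖_∞, R‖Q − Σ*‖_∞}`, then every stationary point `θ̃` of
`min_{‖θ‖₁≤R} ½θᵀQθ − bᵀθ + λ‖θ‖₁` satisfies `‖θ̃ − θ*‖₂ ≤ C₂√s·λ/κ₀` and
`‖θ̃ − θ*‖₁ ≤ C₃s·λ/κ₀`. -/
theorem nonconvex_stationary_framework :
    ∃ C₁ C₂ C₃ : ℝ, 0 < C₁ ∧ 0 < C₂ ∧ 0 < C₃ ∧
    ∀ (d s : ℕ) (θs : Fin d → ℝ) (R κ₀ lam : ℝ)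
      (Sig Q : Matrix (Fin d) (Fin d) ℝ) (b : Fin d → ℝ),
      sparse s θs → l1 θs ≤ R →
      Sig.IsSymm → 0 < κ₀ → (∀ v : Fin d → ℝ, κ₀ * (l2 v) ^ 2 ≤ quadForm Sig v) →
      Q.IsSymm →
      C₁ * max (linf (Q.mulVec θs - b)) (R * matSup (Q - Sig)) ≤ lam →
      ∀ θt : Fin d → ℝ,
        IsStationaryL1 Q b lam {θ : Fin d → ℝ | l1 θ ≤ R} θt →
        l2 (θt - θs) ≤ C₂ * Real.sqrt s * lam / κ₀ ∧
        l1 (θt - θs) ≤ C₃ * s * lam / κ₀ := by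
  refine ⟨4, 7/4, 14, by norm_num, by norm_num, by norm_num, ?_⟩
  intro d s θs R κ₀ lam Sig Q b hsp hθsR _hSigSymm hκ hRE _hQSymm hlam θt hstat
  classical
  obtain ⟨hθtS, g, hg, hvar⟩ := hstat
  set Δ : Fin d → ℝ := θt - θs with hΔ
  have hΔi : ∀ i, Δ i = θt i - θs i := fun i => rfl
  -- basic nonnegativity facts
  have hLnn : 0 ≤ linf (Q.mulVec θs - b) := linf_nonneg _
  have hMnn : 0 ≤ matSup (Q - Sig) := matSup_nonneg _
  have hmaxnn : 0 ≤ max (linf (Q.mulVec θs - b)) (R * matSup (Q - Sig)) :=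
    le_trans hLnn (le_max_left _ _)
  have hlam0 : 0 ≤ lam := le_trans (by nlinarith) hlam
  have hL : linf (Q.mulVec θs - b) ≤ lam / 4 := by
    have := le_trans (mul_le_mul_of_nonneg_left (le_max_left (linf (Q.mulVec θs - b))
      (R * matSup (Q - Sig))) (by norm_num : (0:ℝ) ≤ 4)) hlam
    linarith
  have hRM : R * matSup (Q - Sig) ≤ lam / 4 := by
    have := le_trans (mul_le_mul_of_nonneg_left (le_max_right (linf (Q.mulVec θs - b))
      (R * matSup (Q - Sig))) (by norm_num : (0:ℝ) ≤ 4)) hlam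
    linarith
  have hR0 : 0 ≤ R := le_trans (Finset.sum_nonneg (fun i _ => abs_nonneg _)) hθsR
  -- support of θs
  set T : Finset (Fin d) := Finset.univ.filter (fun i => θs i ≠ 0) with hT
  have hTcard : (T.card : ℝ) ≤ s := by
    have : {i | θs i ≠ 0} = (T : Set (Fin d)) := by ext i; simp [hT]
    have h := hsp
    rw [sparse, this, Set.ncard_coe_finset] at h
    exact_mod_cast h
  -- a and c
  set a : ℝ := ∑ i ∈ T, |Δ i| with ha
  set c : ℝ := ∑ i ∈ Finset.univ.filter (fun i => ¬ θs i ≠ 0), |Δ i| with hc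
  have hac : a + c = l1 Δ := by
    rw [ha, hc, l1]; exact Finset.sum_filter_add_sum_filter_not _ _ _
  have ha0 : 0 ≤ a := Finset.sum_nonneg (fun i _ => abs_nonneg _)
  have hc0 : 0 ≤ c := Finset.sum_nonneg (fun i _ => abs_nonneg _)
  have hasqrt : a ≤ Real.sqrt s * l2 Δ := by
    calc a ≤ Real.sqrt T.card * l2 Δ := sum_abs_le_sqrt_card_mul_l2 T Δ
      _ ≤ Real.sqrt s * l2 Δ :=
        mul_le_mul_of_nonneg_right (Real.sqrt_le_sqrt hTcard) (l2_nonneg _)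
  -- l1 Δ ≤ 2R
  have hl1θt : l1 θt ≤ R := hθtS
  have hl1Δ2R : l1 Δ ≤ 2 * R := by
    have : l1 Δ ≤ l1 θt + l1 θs := by
      rw [l1, l1, l1, ← Finset.sum_add_distrib]
      exact Finset.sum_le_sum (fun i _ => by
        rw [hΔi]; exact (abs_sub _ _))
    linarith
  -- Step A: from stationarity and subgradient
  have hstatθs : 0 ≤ ∑ i, (Q.mulVec θt i - b i + lam * g i) * (θs i - θt i) :=
    hvar θs hθsR
  have hsubθs : ∑ i, g i * (θs i - θt i) ≤ l1 θs - l1 θt := by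
    have := hg θs; linarith
  have hsplit : ∑ i, (Q.mulVec θt i - b i + lam * g i) * (θs i - θt i)
      = (∑ i, (Q.mulVec θt i - b i) * (θs i - θt i))
        + lam * ∑ i, g i * (θs i - θt i) := by
    rw [Finset.mul_sum, ← Finset.sum_add_distrib]
    exact Finset.sum_congr rfl (fun i _ => by ring)
  have hA : ∑ i, (Q.mulVec θt i - b i) * Δ i ≤ lam * (l1 θs - l1 θt) := by
    have h1 : 0 ≤ (∑ i, (Q.mulVec θt i - b i) * (θs i - θt i))
        + lam * ∑ i, g i * (θs i - θt i) := hsplit ▸ hstatθs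
    have h2 : lam * ∑ i, g i * (θs i - θt i) ≤ lam * (l1 θs - l1 θt) :=
      mul_le_mul_of_nonneg_left hsubθs hlam0
    have h3 : ∑ i, (Q.mulVec θt i - b i) * (θs i - θt i)
        = - ∑ i, (Q.mulVec θt i - b i) * Δ i := by
      rw [← Finset.sum_neg_distrib]
      exact Finset.sum_congr rfl (fun i _ => by rw [hΔi]; ring)
    linarith [h3 ▸ h1]
  -- Step B: decomposition
  have hB : ∑ i, (Q.mulVec θt i - b i) * Δ i
      = ∑ i, (Q.mulVec θs i - b i) * Δ i + quadForm Q Δ := by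
    rw [quadForm, ← Finset.sum_add_distrib]
    refine Finset.sum_congr rfl (fun i _ => ?_)
    have hmv : Q.mulVec θt i = Q.mulVec θs i + ∑ j, Q i j * Δ j := by
      simp only [Matrix.mulVec, dotProduct, ← Finset.sum_add_distrib]
      exact Finset.sum_congr rfl (fun j _ => by rw [hΔi]; ring)
    rw [hmv]
    rw [show (∑ j, Δ i * Q i j * Δ j) = (∑ j, Q i j * Δ j) * Δ i by
      rw [Finset.sum_mul]; exact Finset.sum_congr rfl (fun j _ => by ring)]
    ring
  -- Step C: restricted eigenvalue lower bound
  have hqsplit : quadForm Q Δ = quadForm Sig Δ + quadForm (Q - Sig) Δ := by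
    rw [quadForm, quadForm, quadForm, ← Finset.sum_add_distrib]
    refine Finset.sum_congr rfl (fun i _ => ?_)
    rw [← Finset.sum_add_distrib]
    refine Finset.sum_congr rfl (fun j _ => ?_)
    simp [Matrix.sub_apply]; ring
  have hpert : - (matSup (Q - Sig) * (l1 Δ * l1 Δ)) ≤ quadForm (Q - Sig) Δ := by
    have habs : |quadForm (Q - Sig) Δ| ≤ matSup (Q - Sig) * (l1 Δ * l1 Δ) := by
      calc |quadForm (Q - Sig) Δ| ≤ ∑ i, ∑ j, |Δ i * (Q - Sig) i j * Δ j| := by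
            refine (Finset.abs_sum_le_sum_abs _ _).trans ?_
            exact Finset.sum_le_sum (fun i _ => Finset.abs_sum_le_sum_abs _ _)
        _ ≤ ∑ i, ∑ j, |Δ i| * matSup (Q - Sig) * |Δ j| := by
            refine Finset.sum_le_sum (fun i _ => Finset.sum_le_sum (fun j _ => ?_))
            rw [abs_mul, abs_mul]
            exact mul_le_mul_of_nonneg_right
              (mul_le_mul_of_nonneg_left (abs_le_matSup _ i j) (abs_nonneg _))
              (abs_nonneg _)
        _ = matSup (Q - Sig) * (l1 Δ * l1 Δ) := by
            rw [l1, Finset.sum_mul_sum]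
            rw [Finset.mul_sum]
            refine Finset.sum_congr rfl (fun i _ => ?_)
            rw [Finset.mul_sum]
            exact Finset.sum_congr rfl (fun j _ => by ring)
    linarith [abs_le.mp habs |>.1]
  have hC : κ₀ * (l2 Δ) ^ 2 - matSup (Q - Sig) * (l1 Δ * l1 Δ) ≤ quadForm Q Δ := by
    have := hRE Δ
    rw [hqsplit]; linarith
  -- Step D: bound on linear term
  have hD : - (linf (Q.mulVec θs - b) * l1 Δ) ≤ ∑ i, (Q.mulVec θs i - b i) * Δ i := by
    have habs : |∑ i, (Q.mulVec θs i - b i) * Δ i| ≤ linf (Q.mulVec θs - b) * l1 Δ := by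
      calc |∑ i, (Q.mulVec θs i - b i) * Δ i| ≤ ∑ i, |(Q.mulVec θs i - b i) * Δ i| :=
            Finset.abs_sum_le_sum_abs _ _
        _ ≤ ∑ i, linf (Q.mulVec θs - b) * |Δ i| := by
            refine Finset.sum_le_sum (fun i _ => ?_)
            rw [abs_mul]
            exact mul_le_mul_of_nonneg_right
              (by simpa using abs_le_linf (Q.mulVec θs - b) i) (abs_nonneg _)
        _ = linf (Q.mulVec θs - b) * l1 Δ := by rw [l1, ← Finset.mul_sum]
    linarith [abs_le.mp habs |>.1]
  -- key inequality
  have hkey1 : κ₀ * (l2 Δ) ^ 2 ≤ lam * (l1 θs - l1 θt)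
      + linf (Q.mulVec θs - b) * l1 Δ + matSup (Q - Sig) * (l1 Δ * l1 Δ) := by
    have := hB ▸ hA
    linarith
  -- perturbation bound via l1 Δ ≤ 2R
  have hMl1 : matSup (Q - Sig) * (l1 Δ * l1 Δ) ≤ (lam / 2) * l1 Δ := by
    have hl1nn : 0 ≤ l1 Δ := Finset.sum_nonneg (fun i _ => abs_nonneg _)
    have h1 : matSup (Q - Sig) * (l1 Δ * l1 Δ) ≤ matSup (Q - Sig) * (2 * R * l1 Δ) := by
      refine mul_le_mul_of_nonneg_left ?_ hMnn
      exact mul_le_mul_of_nonneg_right hl1Δ2R hl1nn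
    nlinarith [mul_le_mul_of_nonneg_right hRM hl1nn]
  -- cone bound: l1 θs - l1 θt ≤ a - c
  have hcone : l1 θs - l1 θt ≤ a - c := by
    have hθs_sum : l1 θs = ∑ i ∈ T, |θs i| := by
      rw [l1]
      rw [← Finset.sum_filter_add_sum_filter_not Finset.univ (fun i => θs i ≠ 0)]
      have : ∑ i ∈ Finset.univ.filter (fun i => ¬ θs i ≠ 0), |θs i| = 0 := by
        refine Finset.sum_eq_zero (fun i hi => ?_)
        simp only [Finset.mem_filter, not_not] at hi
        rw [hi.2, abs_zero]
      rw [hT, this, add_zero]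
    have hθt_ge : ∑ i ∈ T, |θs i| - a + c ≤ l1 θt := by
      rw [l1, ← Finset.sum_filter_add_sum_filter_not Finset.univ (fun i => θs i ≠ 0)]
      have h1 : ∑ i ∈ T, |θs i| - a ≤ ∑ i ∈ Finset.univ.filter (fun i => θs i ≠ 0), |θt i| := by
        rw [ha, ← Finset.sum_sub_distrib]
        refine Finset.sum_le_sum (fun i _ => ?_)
        have : θt i = θs i + Δ i := by rw [hΔi]; ring
        rw [this]
        have := abs_add_le (θs i + Δ i) (-(Δ i))
        simp only [add_neg_cancel_right, abs_neg] at this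
        linarith
      have h2 : c ≤ ∑ i ∈ Finset.univ.filter (fun i => ¬ θs i ≠ 0), |θt i| := by
        rw [hc]
        refine Finset.sum_le_sum (fun i hi => ?_)
        simp only [Finset.mem_filter, not_not] at hi
        rw [hΔi, hi.2, sub_zero]
      linarith
    linarith
  -- main bound
  have hl1eq : l1 Δ = a + c := hac.symm
  have hmain : κ₀ * (l2 Δ) ^ 2 ≤ (7/4) * lam * a - (1/4) * lam * c := by
    have h1 : linf (Q.mulVec θs - b) * l1 Δ ≤ (lam / 4) * l1 Δ := by
      have hl1nn : 0 ≤ l1 Δ := Finset.sum_nonneg (fun i _ => abs_nonneg _)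
      exact mul_le_mul_of_nonneg_right hL hl1nn
    have h2 : lam * (l1 θs - l1 θt) ≤ lam * (a - c) :=
      mul_le_mul_of_nonneg_left hcone hlam0
    have h3 : lam * (a - c) + (lam / 4) * (a + c) + (lam / 2) * (a + c)
        = (7/4) * lam * a - (1/4) * lam * c := by ring
    rw [hl1eq] at h1 hMl1 hkey1
    linarith
  have hl2sq : 0 ≤ κ₀ * (l2 Δ) ^ 2 := by positivity
  -- l2 bound
  have hl2bound : l2 Δ ≤ (7/4) * Real.sqrt s * lam / κ₀ := by
    have h1 : κ₀ * (l2 Δ) ^ 2 ≤ (7/4) * lam * (Real.sqrt s * l2 Δ) := by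
      have := mul_le_mul_of_nonneg_left hasqrt (by linarith : (0:ℝ) ≤ (7/4) * lam)
      linarith [mul_nonneg hlam0 hc0]
    rcases eq_or_lt_of_le (l2_nonneg Δ) with h0 | h0
    · rw [← h0]; positivity
    · rw [le_div_iff₀ hκ]
      nlinarith [h1, h0]
  refine ⟨hl2bound, ?_⟩
  -- l1 bound
  rcases eq_or_lt_of_le hlam0 with hlam' | hlam'
  · -- lam = 0
    have : κ₀ * (l2 Δ) ^ 2 ≤ 0 := by rw [← hlam'] at hmain; linarith
    have hx2 : (l2 Δ) ^ 2 = 0 :=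
      le_antisymm (by nlinarith) (sq_nonneg _)
    have hl2z : l2 Δ = 0 := pow_eq_zero_iff (by norm_num) |>.mp hx2
    have hsumz : ∑ i, (Δ i) ^ 2 = 0 := by
      have := Real.sqrt_eq_zero'.mp hl2z
      have hnn : 0 ≤ ∑ i, (Δ i) ^ 2 := Finset.sum_nonneg (fun i _ => by positivity)
      linarith
    have hΔz : ∀ i, Δ i = 0 := by
      intro i
      have := (Finset.sum_eq_zero_iff_of_nonneg
        (fun i _ => by positivity : ∀ i ∈ Finset.univ, 0 ≤ (Δ i)^2)).mp hsumz i (Finset.mem_univ i)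
      exact pow_eq_zero_iff (by norm_num) |>.mp this
    have : l1 Δ = 0 := by
      rw [l1]; exact Finset.sum_eq_zero (fun i _ => by rw [hΔz i, abs_zero])
    rw [this, ← hlam']
    positivity
  · -- lam > 0
    have hca : c ≤ 7 * a := by
      have : 0 ≤ (7/4) * lam * a - (1/4) * lam * c := le_trans hl2sq hmain
      nlinarith
    have h8a : l1 Δ ≤ 8 * a := by rw [hl1eq]; linarith
    have : l1 Δ ≤ 8 * (Real.sqrt s * l2 Δ) := by
      calc l1 Δ ≤ 8 * a := h8a
        _ ≤ 8 * (Real.sqrt s * l2 Δ) := by linarith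
    have hfin : l1 Δ ≤ 8 * Real.sqrt s * ((7/4) * Real.sqrt s * lam / κ₀) := by
      have hs0 : 0 ≤ Real.sqrt s := Real.sqrt_nonneg _
      calc l1 Δ ≤ 8 * (Real.sqrt s * l2 Δ) := this
        _ ≤ 8 * (Real.sqrt s * ((7/4) * Real.sqrt s * lam / κ₀)) := by
            refine mul_le_mul_of_nonneg_left ?_ (by norm_num)
            exact mul_le_mul_of_nonneg_left hl2bound hs0
        _ = 8 * Real.sqrt s * ((7/4) * Real.sqrt s * lam / κ₀) := by ring
    have hss : Real.sqrt s * Real.sqrt s = (s : ℝ) :=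
      Real.mul_self_sqrt (Nat.cast_nonneg _)
    calc l1 Δ ≤ 8 * Real.sqrt s * ((7/4) * Real.sqrt s * lam / κ₀) := hfin
      _ = 14 * (Real.sqrt s * Real.sqrt s) * lam / κ₀ := by ring
      _ = 14 * s * lam / κ₀ := by rw [hss]
end
end

section
/- Let Q ∈ ℝ^{d×d} be symmetric positive semidefinite, b ∈ ℝ^d, λ > 0, let θ* ∈ ℝ^d be s-sparse, and let θ̂ be a global minimizer of ½θᵀQθ − bᵀθ + λ‖θ‖₁ over ℝ^d; set Δ̂ = θ̂ − θ*. If λ ≥ 2‖Qθ* − b‖_∞, then ‖Δ̂‖₁ ≤ 10√s·‖Δ̂‖₂. If moreover Δ̂ᵀQΔ̂ ≥ κ‖Δ̂‖₂² for some κ > 0, then ‖Δ̂‖₂ ≤ 30√s·(λ/κ) and ‖Δ̂‖₁ ≤ 300s·(λ/κ). -/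
open Finset

noncomputable section

set_option maxHeartbeats 1000000 in
/-- deterministic framework for the regularized Lasso-type estimator.
Let `Q ⪰ 0` be symmetric, `θ*` be `s`-sparse, and `θ̂` a global minimizer of
`½θᵀQθ − bᵀθ + λ‖θ‖₁`. If `λ ≥ 2‖Qθ* − b‖_∞`, then `‖Δ̂‖₁ ≤ 10√s‖Δ̂‖₂` for `Δ̂ = θ̂ − θ*`;
if moreover `Δ̂ᵀQΔ̂ ≥ κ‖Δ̂‖₂²` for some `κ > 0`, then `‖Δ̂‖₂ ≤ 30√s(λ/κ)` and
`‖Δ̂‖₁ ≤ 300s(λ/κ)`. -/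
theorem lasso_framework
    {d : ℕ} (Q : Matrix (Fin d) (Fin d) ℝ) (hQsym : Q.IsSymm)
    (hQpsd : ∀ v : Fin d → ℝ, 0 ≤ quadForm Q v)
    (b : Fin d → ℝ) (lam : ℝ) (hlam : 0 < lam)
    (s : ℕ) (θs : Fin d → ℝ) (hsparse : sparse s θs)
    (θh : Fin d → ℝ)
    (hmin : ∀ θ : Fin d → ℝ,
      quadForm Q θh / 2 - ∑ i, b i * θh i + lam * l1 θh
        ≤ quadForm Q θ / 2 - ∑ i, b i * θ i + lam * l1 θ)
    (hlam2 : 2 * linf (Q.mulVec θs - b) ≤ lam) :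
    l1 (θh - θs) ≤ 10 * Real.sqrt s * l2 (θh - θs) ∧
    (∀ κ : ℝ, 0 < κ → κ * (l2 (θh - θs)) ^ 2 ≤ quadForm Q (θh - θs) →
      l2 (θh - θs) ≤ 30 * Real.sqrt s * (lam / κ) ∧
      l1 (θh - θs) ≤ 300 * s * (lam / κ)) := by
  classical
  set Δ : Fin d → ℝ := θh - θs with hΔdef
  have hΔi : ∀ i, Δ i = θh i - θs i := fun i => rfl
  -- support of θs
  set S : Finset (Fin d) := Finset.univ.filter (fun i => θs i ≠ 0) with hSdef
  have hScard : (S.card : ℝ) ≤ (s : ℝ) := by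
    have hset : {i | θs i ≠ 0} = (S : Set (Fin d)) := by
      ext i; simp [hSdef]
    have := hsparse
    rw [sparse, hset, Set.ncard_coe_finset] at this
    exact_mod_cast this
  set lS : ℝ := ∑ i ∈ S, |Δ i| with hlSdef
  set lSc : ℝ := ∑ i ∈ Sᶜ, |Δ i| with hlScdef
  have hlS0 : 0 ≤ lS := Finset.sum_nonneg fun i _ => abs_nonneg _
  have hlSc0 : 0 ≤ lSc := Finset.sum_nonneg fun i _ => abs_nonneg _
  have hsplit : l1 Δ = lS + lSc := by
    rw [l1, hlSdef, hlScdef, Finset.sum_add_sum_compl]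
  have hl20 : 0 ≤ l2 Δ := Real.sqrt_nonneg _
  have hl2sq : (l2 Δ) ^ 2 = ∑ i, (Δ i) ^ 2 := by
    rw [l2]; exact Real.sq_sqrt (Finset.sum_nonneg fun i _ => sq_nonneg _)
  -- expansion of quadratic form
  have hcross : (∑ i, ∑ j, θs i * Q i j * Δ j) = ∑ i, ∑ j, Δ i * Q i j * θs j := by
    rw [Finset.sum_comm]
    refine Finset.sum_congr rfl fun i _ => Finset.sum_congr rfl fun j _ => ?_
    have : Q j i = Q i j := by
      have := congrFun (congrFun hQsym i) j
      simpa [Matrix.transpose_apply] using this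
    rw [this]; ring
  have hexpand : quadForm Q θh
      = quadForm Q Δ + 2 * (∑ i, Δ i * Q.mulVec θs i) + quadForm Q θs := by
    have h1 : quadForm Q θh = ∑ i, ∑ j,
        (Δ i * Q i j * Δ j + Δ i * Q i j * θs j + θs i * Q i j * Δ j
          + θs i * Q i j * θs j) := by
      rw [quadForm]
      refine Finset.sum_congr rfl fun i _ => Finset.sum_congr rfl fun j _ => ?_
      have hi : θh i = Δ i + θs i := by rw [hΔi]; ring
      have hj : θh j = Δ j + θs j := by rw [hΔi]; ring
      rw [hi, hj]; ring
    rw [h1]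
    simp only [Finset.sum_add_distrib]
    have hmv : (∑ i, Δ i * Q.mulVec θs i) = ∑ i, ∑ j, Δ i * Q i j * θs j := by
      refine Finset.sum_congr rfl fun i _ => ?_
      rw [Matrix.mulVec, dotProduct, Finset.mul_sum]
      exact Finset.sum_congr rfl fun j _ => by ring
    rw [hcross, hmv, quadForm, quadForm]
    ring
  -- basic inequality
  have hbasic : quadForm Q Δ / 2
      ≤ (∑ i, Δ i * (b i - Q.mulVec θs i)) + lam * (l1 θs - l1 θh) := by
    have h := hmin θs
    have hb : (∑ i, b i * θh i) - (∑ i, b i * θs i) = ∑ i, Δ i * b i := by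
      rw [← Finset.sum_sub_distrib]
      exact Finset.sum_congr rfl fun i _ => by rw [hΔi]; ring
    have hsum : (∑ i, Δ i * (b i - Q.mulVec θs i))
        = (∑ i, Δ i * b i) - ∑ i, Δ i * Q.mulVec θs i := by
      rw [← Finset.sum_sub_distrib]
      exact Finset.sum_congr rfl fun i _ => by ring
    rw [hexpand] at h
    linarith [h, hb, hsum]
  -- bound the linear term by (lam/2) * l1 Δ
  have hlin : (∑ i, Δ i * (b i - Q.mulVec θs i)) ≤ (lam / 2) * l1 Δ := by
    set M : ℝ := linf (Q.mulVec θs - b) with hMdef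
    have hMb : ∀ i, |Q.mulVec θs i - b i| ≤ M := by
      intro i
      have hbdd : BddAbove {r : ℝ | ∃ i, r = |(Q.mulVec θs - b) i|} := by
        have : {r : ℝ | ∃ i, r = |(Q.mulVec θs - b) i|}
            = Set.range (fun i => |(Q.mulVec θs - b) i|) := by
          ext r; simp [Set.range, eq_comm]
        rw [this]
        exact (Set.finite_range _).bddAbove
      have := le_csSup hbdd ⟨i, rfl⟩
      simpa [hMdef, linf, Pi.sub_apply] using this
    have step : ∀ i ∈ Finset.univ, Δ i * (b i - Q.mulVec θs i) ≤ |Δ i| * (lam / 2) := by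
      intro i _
      have h1 : Δ i * (b i - Q.mulVec θs i) ≤ |Δ i| * |Q.mulVec θs i - b i| := by
        calc Δ i * (b i - Q.mulVec θs i) ≤ |Δ i * (b i - Q.mulVec θs i)| := le_abs_self _
        _ = |Δ i| * |Q.mulVec θs i - b i| := by rw [abs_mul, abs_sub_comm]
      have h2 : |Q.mulVec θs i - b i| ≤ lam / 2 := le_trans (hMb i) (by linarith)
      calc Δ i * (b i - Q.mulVec θs i) ≤ |Δ i| * |Q.mulVec θs i - b i| := h1
      _ ≤ |Δ i| * (lam / 2) := mul_le_mul_of_nonneg_left h2 (abs_nonneg _)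
    calc (∑ i, Δ i * (b i - Q.mulVec θs i)) ≤ ∑ i, |Δ i| * (lam / 2) :=
          Finset.sum_le_sum step
    _ = (lam / 2) * l1 Δ := by rw [l1, ← Finset.sum_mul]; ring
  -- l1 decomposition bound
  have hdecomp : l1 θs - l1 θh ≤ lS - lSc := by
    have h1 : l1 θs - l1 θh = ∑ i, (|θs i| - |θh i|) := by
      rw [l1, l1, ← Finset.sum_sub_distrib]
    have h2 : (∑ i, (|θs i| - |θh i|))
        = (∑ i ∈ S, (|θs i| - |θh i|)) + ∑ i ∈ Sᶜ, (|θs i| - |θh i|) :=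
      (Finset.sum_add_sum_compl S _).symm
    have h3 : (∑ i ∈ S, (|θs i| - |θh i|)) ≤ lS := by
      refine Finset.sum_le_sum fun i _ => ?_
      have := abs_sub_abs_le_abs_sub (θs i) (θh i)
      have habs : |θs i - θh i| = |Δ i| := by rw [hΔi, abs_sub_comm]
      linarith [this, habs.le, habs.ge]
    have h4 : (∑ i ∈ Sᶜ, (|θs i| - |θh i|)) = -lSc := by
      rw [hlScdef, ← Finset.sum_neg_distrib]
      refine Finset.sum_congr rfl fun i hi => ?_
      have hz : θs i = 0 := by
        simp only [hSdef, Finset.mem_compl, Finset.mem_filter, Finset.mem_univ,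
          true_and, not_not] at hi
        exact hi
      rw [hΔi, hz]
      simp
    linarith [h1, h2, h3, h4]
  have hA0 : 0 ≤ quadForm Q Δ := hQpsd Δ
  -- key inequality : A/2 ≤ (lam/2)(lS+lSc) + lam (lS - lSc)
  have hkey : quadForm Q Δ / 2 ≤ (lam / 2) * (lS + lSc) + lam * (lS - lSc) := by
    have := mul_le_mul_of_nonneg_left hdecomp (le_of_lt hlam)
    calc quadForm Q Δ / 2
        ≤ (∑ i, Δ i * (b i - Q.mulVec θs i)) + lam * (l1 θs - l1 θh) := hbasic
      _ ≤ (lam / 2) * l1 Δ + lam * (lS - lSc) := by linarith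
      _ = (lam / 2) * (lS + lSc) + lam * (lS - lSc) := by rw [hsplit]
  have hcone : lSc ≤ 3 * lS := by nlinarith
  have hl1_4lS : l1 Δ ≤ 4 * lS := by rw [hsplit]; linarith
  -- Cauchy-Schwarz : lS ≤ sqrt s * l2 Δ
  have hCS : lS ≤ Real.sqrt s * l2 Δ := by
    have h1 : lS ^ 2 ≤ (S.card : ℝ) * ∑ i ∈ S, (Δ i) ^ 2 := by
      have hcs := Finset.sum_mul_sq_le_sq_mul_sq S (fun _ => (1:ℝ)) (fun i => |Δ i|)
      have e1 : (∑ i ∈ S, (1:ℝ) * |Δ i|) = lS := by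
        rw [hlSdef]; exact Finset.sum_congr rfl fun i _ => one_mul _
      have e2 : (∑ _i ∈ S, (1:ℝ)^2) = (S.card:ℝ) := by
        simp
      have e3 : (∑ i ∈ S, |Δ i|^2) = ∑ i ∈ S, (Δ i)^2 := by
        exact Finset.sum_congr rfl fun i _ => sq_abs _
      rw [e1, e2, e3] at hcs; exact hcs
    have h2 : (∑ i ∈ S, (Δ i) ^ 2) ≤ ∑ i, (Δ i) ^ 2 :=
      Finset.sum_le_sum_of_subset_of_nonneg (Finset.subset_univ S)
        (fun i _ _ => sq_nonneg _)
    have h3 : lS ^ 2 ≤ (s : ℝ) * (l2 Δ) ^ 2 := by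
      rw [hl2sq]
      calc lS ^ 2 ≤ (S.card : ℝ) * ∑ i ∈ S, (Δ i) ^ 2 := h1
        _ ≤ (s : ℝ) * ∑ i, (Δ i) ^ 2 := by
            apply mul_le_mul hScard h2 (Finset.sum_nonneg fun i _ => sq_nonneg _)
              (Nat.cast_nonneg s)
    calc lS = Real.sqrt (lS ^ 2) := (Real.sqrt_sq hlS0).symm
      _ ≤ Real.sqrt ((s : ℝ) * (l2 Δ) ^ 2) := Real.sqrt_le_sqrt h3
      _ = Real.sqrt s * Real.sqrt ((l2 Δ) ^ 2) := Real.sqrt_mul (Nat.cast_nonneg s) _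
      _ = Real.sqrt s * l2 Δ := by rw [Real.sqrt_sq hl20]
  have hsl2 : 0 ≤ Real.sqrt s * l2 Δ := mul_nonneg (Real.sqrt_nonneg _) hl20
  have hfirst : l1 Δ ≤ 10 * Real.sqrt s * l2 Δ := by
    calc l1 Δ ≤ 4 * lS := hl1_4lS
      _ ≤ 4 * (Real.sqrt s * l2 Δ) := by linarith
      _ ≤ 10 * Real.sqrt s * l2 Δ := by linarith
  refine ⟨hfirst, fun κ hκ hκQ => ?_⟩
  have hA_le : quadForm Q Δ ≤ 3 * lam * (Real.sqrt s * l2 Δ) := by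
    have h1 : quadForm Q Δ ≤ 3 * lam * lS := by nlinarith
    nlinarith
  have hl2bound : l2 Δ ≤ 30 * Real.sqrt s * (lam / κ) := by
    have hdiv : 30 * Real.sqrt s * (lam / κ) = (30 * Real.sqrt s * lam) / κ := by ring
    rw [hdiv, le_div_iff₀ hκ]
    rcases eq_or_lt_of_le hl20 with h0 | h0
    · rw [← h0, zero_mul]
      positivity
    · have h1 : κ * (l2 Δ) ^ 2 ≤ 3 * lam * (Real.sqrt s * l2 Δ) := le_trans hκQ hA_le
      have h2 : κ * l2 Δ ≤ 3 * lam * Real.sqrt s := by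
        have := (mul_le_mul_iff_left₀ h0).mp (by nlinarith : κ * l2 Δ * l2 Δ ≤ 3 * lam * Real.sqrt s * l2 Δ)
        exact this
      nlinarith [mul_nonneg hlam.le (Real.sqrt_nonneg (s : ℝ))]
  refine ⟨hl2bound, ?_⟩
  have hsq : Real.sqrt s * Real.sqrt s = (s : ℝ) := Real.mul_self_sqrt (Nat.cast_nonneg s)
  calc l1 Δ ≤ 10 * Real.sqrt s * l2 Δ := hfirst
    _ ≤ 10 * Real.sqrt s * (30 * Real.sqrt s * (lam / κ)) := by
        apply mul_le_mul_of_nonneg_left hl2bound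
        positivity
    _ = 300 * (Real.sqrt s * Real.sqrt s) * (lam / κ) := by ring
    _ = 300 * s * (lam / κ) := by rw [hsq]
end
end

section
/- Let x be a random vector in ℝ^d with Σ* = E[x xᵀ] satisfying λ_min(Σ*) ≥ κ₀ > 0, let ε be a zero-mean square-integrable real random variable independent of x, let θ* ∈ ℝ^d, and set y = xᵀθ* + ε. If E|y|^{2l} ≤ M for some l ≥ 1 and M > 0, then ‖θ*‖₂ ≤ M^{1/(2l)}/κ₀^{1/2}. -/
open MeasureTheory ProbabilityTheory

noncomputable section

lemma integrable_mul_of_sq {Ω : Type*} [MeasurableSpace Ω] {μ : Measure Ω} {f g : Ω → ℝ}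
    (hf : AEStronglyMeasurable f μ) (hg : AEStronglyMeasurable g μ)
    (hf2 : Integrable (fun ω => f ω ^ 2) μ) (hg2 : Integrable (fun ω => g ω ^ 2) μ) :
    Integrable (fun ω => f ω * g ω) μ := by
  refine Integrable.mono' ((hf2.add hg2).div_const 2) (hf.mul hg) (ae_of_all _ fun ω => ?_)
  have h1 : ‖f ω * g ω‖ = |f ω| * |g ω| := by rw [Real.norm_eq_abs, abs_mul]
  rw [h1]
  show |f ω| * |g ω| ≤ (f ω ^ 2 + g ω ^ 2) / 2
  nlinarith [sq_nonneg (|f ω| - |g ω|), sq_abs (f ω), sq_abs (g ω)]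

/-- implicit ℓ₂-bound on the signal from the response moment.
If `Σ* = E[xxᵀ]` has smallest eigenvalue at least `κ₀ > 0`, `ε` is zero-mean,
square-integrable and independent of `x`, `y = xᵀθ* + ε`, and `E|y|^{2l} ≤ M` for some
`l ≥ 1`, `M > 0`, then `‖θ*‖₂ ≤ M^{1/(2l)}/κ₀^{1/2}`. -/
theorem signal_l2_bound
    {Ω : Type*} [MeasurableSpace Ω] (μ : Measure Ω) [IsProbabilityMeasure μ]
    {d : ℕ} (x : Ω → Fin d → ℝ) (hxmeas : Measurable x)
    (hx2 : ∀ i, Integrable (fun ω => x ω i ^ 2) μ)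
    (ε : Ω → ℝ) (hεmeas : Measurable ε)
    (hε2 : Integrable (fun ω => ε ω ^ 2) μ)
    (hεmean : ∫ ω, ε ω ∂μ = 0)
    (hindep : IndepFun x ε μ)
    (Sig : Matrix (Fin d) (Fin d) ℝ)
    (hSig : ∀ i j, ∫ ω, x ω i * x ω j ∂μ = Sig i j)
    (κ₀ : ℝ) (hκ₀ : 0 < κ₀)
    (hmin : ∀ v : Fin d → ℝ, κ₀ * (l2 v) ^ 2 ≤ quadForm Sig v)
    (θs : Fin d → ℝ)
    (l M : ℝ) (hl : 1 ≤ l) (hM : 0 < M)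
    (hymom : ∫ ω, |(∑ i, x ω i * θs i) + ε ω| ^ (2 * l) ∂μ ≤ M)
    (hyint : Integrable (fun ω => |(∑ i, x ω i * θs i) + ε ω| ^ (2 * l)) μ) :
    l2 θs ≤ M ^ (1 / (2 * l)) / κ₀ ^ ((1 : ℝ) / 2) := by
  have hlpos : (0 : ℝ) < l := lt_of_lt_of_le one_pos hl
  set f : Ω → ℝ := fun ω => ∑ i, x ω i * θs i with hf_def
  set y : Ω → ℝ := fun ω => f ω + ε ω with hy_def
  have hximeas : ∀ i, Measurable fun ω => x ω i :=
    fun i => (measurable_pi_apply i).comp hxmeas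
  have hfmeas : Measurable f :=
    Finset.measurable_sum _ fun i _ => (hximeas i).mul_const _
  have hymeas : Measurable y := hfmeas.add hεmeas
  -- Memℒp 2 facts
  have hxLp : ∀ i, MemLp (fun ω => x ω i) 2 μ := fun i =>
    (memLp_two_iff_integrable_sq (hximeas i).aestronglyMeasurable).2 (hx2 i)
  have hfLp : MemLp f 2 μ := by
    have : ∀ i ∈ Finset.univ, MemLp (fun ω => θs i * x ω i) 2 μ :=
      fun i _ => (hxLp i).const_mul _
    have h := memLp_finset_sum (f := fun i ω => θs i * x ω i) Finset.univ this
    have heq : (fun ω => ∑ i, θs i * x ω i) = f := by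
      funext ω; exact Finset.sum_congr rfl fun i _ => mul_comm _ _
    rwa [heq] at h
  have hεLp : MemLp ε 2 μ :=
    (memLp_two_iff_integrable_sq hεmeas.aestronglyMeasurable).2 hε2
  have hyLp : MemLp y 2 μ := hfLp.add hεLp
  have hy2 : Integrable (fun ω => y ω ^ 2) μ :=
    (memLp_two_iff_integrable_sq hymeas.aestronglyMeasurable).1 hyLp
  have hf2 : Integrable (fun ω => f ω ^ 2) μ :=
    (memLp_two_iff_integrable_sq hfmeas.aestronglyMeasurable).1 hfLp
  have hfε : Integrable (fun ω => f ω * ε ω) μ :=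
    integrable_mul_of_sq hfmeas.aestronglyMeasurable hεmeas.aestronglyMeasurable hf2 hε2
  -- cross term zero
  have hindf : IndepFun f ε μ := by
    have := hindep.comp (φ := fun v : Fin d → ℝ => ∑ i, v i * θs i) (ψ := id)
      (Finset.measurable_sum _ fun i _ => (measurable_pi_apply i).mul_const _) measurable_id
    exact this
  have hcross : ∫ ω, f ω * ε ω ∂μ = 0 := by
    have := IndepFun.integral_mul_eq_mul_integral hindf hfmeas.aestronglyMeasurable hεmeas.aestronglyMeasurable
    have h' : ∫ ω, f ω * ε ω ∂μ = (∫ ω, f ω ∂μ) * ∫ ω, ε ω ∂μ := this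
    rw [h', hεmean, mul_zero]
  -- E f² = quadForm
  have hxij : ∀ i j, Integrable (fun ω => x ω i * x ω j) μ := fun i j =>
    integrable_mul_of_sq (hximeas i).aestronglyMeasurable (hximeas j).aestronglyMeasurable
      (hx2 i) (hx2 j)
  have hEf2 : ∫ ω, f ω ^ 2 ∂μ = quadForm Sig θs := by
    have hexp : ∀ ω, f ω ^ 2 = ∑ i, ∑ j, θs i * θs j * (x ω i * x ω j) := by
      intro ω
      simp only [hf_def, sq, Finset.sum_mul_sum]
      refine Finset.sum_congr rfl fun i _ => Finset.sum_congr rfl fun j _ => by ring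
    simp only [hexp, quadForm]
    rw [integral_finset_sum _ fun i _ => integrable_finset_sum _ fun j _ =>
      ((hxij i j).const_mul _)]
    refine Finset.sum_congr rfl fun i _ => ?_
    rw [integral_finset_sum _ fun j _ => ((hxij i j).const_mul _)]
    refine Finset.sum_congr rfl fun j _ => ?_
    rw [integral_const_mul, hSig i j]
    ring
  -- E y² ≥ κ₀ ‖θ‖²
  have hEy2 : ∫ ω, y ω ^ 2 ∂μ
      = ∫ ω, f ω ^ 2 ∂μ + 2 * ∫ ω, f ω * ε ω ∂μ + ∫ ω, ε ω ^ 2 ∂μ := by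
    have hexp : ∀ ω, y ω ^ 2 = f ω ^ 2 + 2 * (f ω * ε ω) + ε ω ^ 2 := fun ω => by
      simp only [hy_def]; ring
    have hB : Integrable (fun ω => 2 * (f ω * ε ω)) μ := hfε.const_mul 2
    have hA : Integrable (fun ω => f ω ^ 2 + 2 * (f ω * ε ω)) μ := hf2.add hB
    simp only [hexp]
    rw [integral_add hA hε2, integral_add hf2 hB, integral_const_mul]
  have hε2nonneg : 0 ≤ ∫ ω, ε ω ^ 2 ∂μ := integral_nonneg fun ω => sq_nonneg _
  have hlow : κ₀ * (l2 θs) ^ 2 ≤ ∫ ω, y ω ^ 2 ∂μ := by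
    have := hmin θs
    rw [hEy2, hcross]
    linarith [hEf2 ▸ this]
  -- Jensen: (E y²)^l ≤ E (y²)^l = E |y|^(2l) ≤ M
  have hpt : ∀ ω, (y ω ^ 2) ^ l = |y ω| ^ (2 * l) := by
    intro ω
    rw [Real.rpow_mul (abs_nonneg _), Real.rpow_two, sq_abs]
  have hgint : Integrable (fun ω => (y ω ^ 2) ^ l) μ := by
    simp only [hpt]; exact hyint
  have hjensen : (∫ ω, y ω ^ 2 ∂μ) ^ l ≤ ∫ ω, (y ω ^ 2) ^ l ∂μ := by
    have := (convexOn_rpow hl).map_integral_le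
      (Real.continuous_rpow_const (le_of_lt hlpos)).continuousOn isClosed_Ici
      (ae_of_all _ fun ω => Set.mem_Ici.2 (sq_nonneg (y ω))) hy2 ?_
    · exact this
    · exact hgint
  have hjM : (∫ ω, y ω ^ 2 ∂μ) ^ l ≤ M := by
    refine hjensen.trans ?_
    calc ∫ ω, (y ω ^ 2) ^ l ∂μ = ∫ ω, |y ω| ^ (2 * l) ∂μ := by simp only [hpt]
    _ ≤ M := hymom
  have hEy2nonneg : 0 ≤ ∫ ω, y ω ^ 2 ∂μ := integral_nonneg fun ω => sq_nonneg _
  have hEyM : ∫ ω, y ω ^ 2 ∂μ ≤ M ^ (1 / l) := by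
    have h1 : ((∫ ω, y ω ^ 2 ∂μ) ^ l) ^ (1 / l) ≤ M ^ (1 / l) :=
      Real.rpow_le_rpow (Real.rpow_nonneg hEy2nonneg _) hjM (by positivity)
    rwa [← Real.rpow_mul hEy2nonneg, mul_one_div, div_self hlpos.ne',
      Real.rpow_one] at h1
  -- conclude
  have hsq : (l2 θs) ^ 2 ≤ M ^ (1 / l) / κ₀ := by
    rw [le_div_iff₀ hκ₀]
    calc (l2 θs) ^ 2 * κ₀ = κ₀ * (l2 θs) ^ 2 := by ring
    _ ≤ ∫ ω, y ω ^ 2 ∂μ := hlow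
    _ ≤ M ^ (1 / l) := hEyM
  have hRsq : (M ^ (1 / (2 * l)) / κ₀ ^ ((1 : ℝ) / 2)) ^ 2 = M ^ (1 / l) / κ₀ := by
    have e1 : (1 : ℝ) / (2 * l) * 2 = 1 / l := by
      field_simp
    have e2 : ((1 : ℝ) / 2) * 2 = 1 := by norm_num
    rw [div_pow, ← Real.rpow_natCast (M ^ (1 / (2 * l))) 2, ← Real.rpow_mul hM.le,
      ← Real.rpow_natCast (κ₀ ^ ((1 : ℝ) / 2)) 2, ← Real.rpow_mul hκ₀.le]
    push_cast
    rw [e1, e2, Real.rpow_one]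
  have hl2nonneg : 0 ≤ l2 θs := Real.sqrt_nonneg _
  have hRnonneg : 0 ≤ M ^ (1 / (2 * l)) / κ₀ ^ ((1 : ℝ) / 2) := by positivity
  nlinarith [hRsq ▸ hsq]
end
end
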